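/- arXiv:1106.3370 — 8 statements merged into one kernel-verified Lean document; each statement's English description precedes it below -/
import Mathlib

section
/- Let V be a vector space over a field K, let L : V → V be a linear operator, and for each j = 1,…,m let f^j_1,…,f^j_{n_j} be a λ_j-chain of L (the scalars λ_1,…,λ_m ∈ K need not be distinct). If the eigenvectors f^1_{n_1}, f^2_{n_2}, …, f^m_{n_m} at the ends of the chains are linearly independent, then the whole collection {f^j_i : 1 ≤ j ≤ m, 1 ≤ i ≤ n_j} is linearly independent. -/
open Polynomial

section Aux

variable {K V : Type*} [Field K] [AddCommGroup V] [Module K V]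
variable (L : Module.End K V) {N : ℕ} {lam0 : K} {g : Fin N → V}

private def chainSpan (K : Type*) {V : Type*} [Field K] [AddCommGroup V] [Module K V]
    {N : ℕ} (g : Fin N → V) (i0 : ℕ) : Submodule K V :=
  Submodule.span K (g '' {i' : Fin N | i0 ≤ (i' : ℕ)})

private lemma chainSpan_mem (i0 : ℕ) (i : Fin N) (h : i0 ≤ (i : ℕ)) :
    g i ∈ chainSpan K g i0 :=
  Submodule.subset_span ⟨i, h, rfl⟩

private lemma chainSpan_next_mem (i0 : ℕ) (i : Fin N) (h : i0 ≤ (i : ℕ) + 1) :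
    (if h' : (i : ℕ) + 1 < N then g ⟨(i : ℕ) + 1, h'⟩ else 0) ∈ chainSpan K g i0 := by
  split
  · exact chainSpan_mem _ _ (by simpa)
  · exact Submodule.zero_mem _

private lemma chainSpan_L_mem
    (hg : ∀ i : Fin N, L (g i) - lam0 • g i =
      if h : (i : ℕ) + 1 < N then g ⟨(i : ℕ) + 1, h⟩ else 0)
    (i0 : ℕ) : ∀ v ∈ chainSpan K g i0, L v ∈ chainSpan K g i0 := by
  intro v hv
  have hle : chainSpan K g i0 ≤ (chainSpan K g i0).comap L := by
    rw [chainSpan, Submodule.span_le]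
    rintro _ ⟨i, hi, rfl⟩
    simp only [Set.mem_setOf_eq] at hi
    simp only [SetLike.mem_coe, Submodule.mem_comap]
    have h1 : L (g i) = lam0 • g i +
        (if h : (i : ℕ) + 1 < N then g ⟨(i : ℕ) + 1, h⟩ else 0) :=
      sub_eq_iff_eq_add'.mp (hg i)
    rw [h1]
    exact Submodule.add_mem _ (Submodule.smul_mem _ _ (chainSpan_mem _ _ hi))
      (chainSpan_next_mem _ _ (by omega))
  exact hle hv

private lemma chainSpan_aeval_mem
    (hg : ∀ i : Fin N, L (g i) - lam0 • g i =
      if h : (i : ℕ) + 1 < N then g ⟨(i : ℕ) + 1, h⟩ else 0)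
    (p : K[X]) (i0 : ℕ) : ∀ v ∈ chainSpan K g i0, (aeval L p) v ∈ chainSpan K g i0 := by
  induction p using Polynomial.induction_on with
  | C a =>
    intro v hv
    simpa [Module.algebraMap_end_apply] using Submodule.smul_mem _ a hv
  | add p q hp hq =>
    intro v hv
    rw [map_add, LinearMap.add_apply]
    exact Submodule.add_mem _ (hp v hv) (hq v hv)
  | monomial k a hk =>
    intro v hv
    have hrw : (C a * X ^ (k + 1) : K[X]) = (C a * X ^ k) * X := by ring
    rw [hrw, map_mul, Module.End.mul_apply, aeval_X]
    exact hk _ (chainSpan_L_mem L hg i0 v hv)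

private lemma chain_pow_apply
    (hg : ∀ i : Fin N, L (g i) - lam0 • g i =
      if h : (i : ℕ) + 1 < N then g ⟨(i : ℕ) + 1, h⟩ else 0) :
    ∀ (t : ℕ) (i : Fin N), ((L - lam0 • 1) ^ t) (g i) =
      if h : (i : ℕ) + t < N then g ⟨(i : ℕ) + t, h⟩ else 0 := by
  intro t
  induction t with
  | zero =>
    intro i
    rw [pow_zero, dif_pos (by simpa using i.isLt : (i : ℕ) + 0 < N)]
    have : (⟨(i : ℕ) + 0, by simpa using i.isLt⟩ : Fin N) = i := by
      apply Fin.ext; simp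
    rw [this]
    rfl
  | succ t ih =>
    intro i
    rw [pow_succ, Module.End.mul_apply]
    have h1 : (L - lam0 • 1) (g i) =
        if h : (i : ℕ) + 1 < N then g ⟨(i : ℕ) + 1, h⟩ else 0 := by
      have := hg i
      simpa [LinearMap.sub_apply, LinearMap.smul_apply, Module.End.one_apply] using this
    rw [h1]
    by_cases h : (i : ℕ) + 1 < N
    · rw [dif_pos h, ih ⟨(i : ℕ) + 1, h⟩]
      have e : ((⟨(i : ℕ) + 1, h⟩ : Fin N) : ℕ) + t = (i : ℕ) + (t + 1) := by simp; omega
      simp only [e]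
    · rw [dif_neg h, map_zero, dif_neg (by omega)]

private lemma chain_aeval_triangular
    (hg : ∀ i : Fin N, L (g i) - lam0 • g i =
      if h : (i : ℕ) + 1 < N then g ⟨(i : ℕ) + 1, h⟩ else 0)
    (p : K[X]) :
    ∀ i : Fin N, (aeval L p) (g i) - p.eval lam0 • g i ∈ chainSpan K g ((i : ℕ) + 1) := by
  induction p using Polynomial.induction_on with
  | C a =>
    intro i
    simp [Module.algebraMap_end_apply]
  | add p q hp hq =>
    intro i
    have h2 : (aeval L (p + q)) (g i) - (p + q).eval lam0 • g i =
        ((aeval L p) (g i) - p.eval lam0 • g i) + ((aeval L q) (g i) - q.eval lam0 • g i) := by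
      rw [map_add, LinearMap.add_apply, eval_add, add_smul]; abel
    rw [h2]
    exact Submodule.add_mem _ (hp i) (hq i)
  | monomial k a hk =>
    intro i
    have hrw : (C a * X ^ (k + 1) : K[X]) = (C a * X ^ k) * X := by ring
    have hL : L (g i) = lam0 • g i +
        (if h : (i : ℕ) + 1 < N then g ⟨(i : ℕ) + 1, h⟩ else 0) :=
      sub_eq_iff_eq_add'.mp (hg i)
    rw [hrw, map_mul, aeval_X, Module.End.mul_apply, hL, map_add, map_smul]
    have h3 : ((C a * X ^ k) * X).eval lam0 = lam0 * (C a * X ^ k).eval lam0 := by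
      rw [eval_mul, eval_X, mul_comm]
    rw [h3, mul_smul]
    have h4 : lam0 • (aeval L (C a * X ^ k)) (g i)
          + (aeval L (C a * X ^ k)) (if h : (i : ℕ) + 1 < N then g ⟨(i : ℕ) + 1, h⟩ else 0)
          - lam0 • ((C a * X ^ k).eval lam0 • g i)
        = lam0 • ((aeval L (C a * X ^ k)) (g i) - (C a * X ^ k).eval lam0 • g i)
          + (aeval L (C a * X ^ k)) (if h : (i : ℕ) + 1 < N then g ⟨(i : ℕ) + 1, h⟩ else 0) := by
      rw [smul_sub]; abel
    rw [h4]
    exact Submodule.add_mem _ (Submodule.smul_mem _ _ (hk i))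
      (chainSpan_aeval_mem L hg _ _ _ (chainSpan_next_mem _ _ le_rfl))

private lemma chainSpan_pow_kill
    (hg : ∀ i : Fin N, L (g i) - lam0 • g i =
      if h : (i : ℕ) + 1 < N then g ⟨(i : ℕ) + 1, h⟩ else 0)
    (d i0 : ℕ) (hd : N ≤ i0 + d) :
    ∀ v ∈ chainSpan K g i0, ((L - lam0 • 1) ^ d) v = 0 := by
  intro v hv
  have hle : chainSpan K g i0 ≤ LinearMap.ker ((L - lam0 • 1) ^ d) := by
    rw [chainSpan, Submodule.span_le]
    rintro _ ⟨i, hi, rfl⟩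
    simp only [Set.mem_setOf_eq] at hi
    simp only [SetLike.mem_coe, LinearMap.mem_ker]
    rw [chain_pow_apply L hg d i, dif_neg (by omega)]
  exact hle hv

private lemma aeval_sub_C_pow (μ : K) (t : ℕ) :
    aeval L ((X - C μ) ^ t) = (L - μ • 1) ^ t := by
  rw [map_pow, map_sub, aeval_X, aeval_C, Module.algebraMap_end_eq_smul_id]
  rfl

end Aux

/-- If `L` is a linear operator on a vector space `V` over a field `K`, and for
each `j = 1, …, m` the vectors `f j 0, …, f j (n j - 1)` form a `λ j`-chain of `L` (nonzero
vectors with `(L - λ j) (f j i) = f j (i+1)` and `(L - λ j)` of the last vector equal to `0`),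
and if the eigenvectors at the ends of the chains are linearly independent, then the whole
collection of chain vectors is linearly independent. -/
theorem chains_with_independent_eigenvectors_linearIndependent
    (K V : Type*) [Field K] [AddCommGroup V] [Module K V]
    (L : V →ₗ[K] V) (m : ℕ) (n : Fin m → ℕ) (hn : ∀ j, 0 < n j)
    (lam : Fin m → K) (f : (j : Fin m) → Fin (n j) → V)
    (hne : ∀ j i, f j i ≠ 0)
    (hchain : ∀ (j : Fin m) (i : Fin (n j)),
      L (f j i) - lam j • f j i = if h : (i : ℕ) + 1 < n j then f j ⟨(i : ℕ) + 1, h⟩ else 0)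
    (hind : LinearIndependent K (fun j : Fin m => f j ⟨n j - 1, Nat.sub_lt (hn j) one_pos⟩)) :
    LinearIndependent K (fun p : Σ j : Fin m, Fin (n j) => f p.1 p.2) := by
  classical
  rw [Fintype.linearIndependent_iff]
  intro c hc
  set e : Fin m → V := fun j => f j ⟨n j - 1, Nat.sub_lt (hn j) one_pos⟩ with he
  set Nmax := Finset.univ.sup n with hN
  have hNle : ∀ j, n j ≤ Nmax := fun j => Finset.le_sup (Finset.mem_univ j)
  have key : ∀ k : ℕ, ∀ (j : Fin m) (i : Fin (n j)),
      Nmax ≤ k + (n j - 1 - (i : ℕ)) → c ⟨j, i⟩ = 0 := by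
    intro k
    induction k with
    | zero =>
      intro j i h
      exfalso
      have h1 := hNle j
      have h2 := i.isLt
      omega
    | succ k ih =>
      intro j i hki
      have hilt := i.isLt
      have hnj := hn j
      set d := n j - 1 - (i : ℕ) with hd
      set r : Polynomial K :=
        ∏ j' ∈ Finset.univ.filter (fun j' => lam j' ≠ lam j),
          (Polynomial.X - Polynomial.C (lam j')) ^ (n j') with hr
      set q : Polynomial K := (Polynomial.X - Polynomial.C (lam j)) ^ d * r with hq
      set a : K := ∏ j' ∈ Finset.univ.filter (fun j' => lam j' ≠ lam j),
          (lam j - lam j') ^ (n j') with ha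
      have ha0 : a ≠ 0 := by
        rw [ha]
        apply Finset.prod_ne_zero_iff.mpr
        intro j' hj'
        simp only [Finset.mem_filter, Finset.mem_univ, true_and] at hj'
        exact pow_ne_zero _ (sub_ne_zero_of_ne (fun hEq => hj' hEq.symm))
      have heval : r.eval (lam j) = a := by
        rw [hr, ha, Polynomial.eval_prod]
        apply Finset.prod_congr rfl
        intro j' _
        simp
      -- apply aeval L q to the relation
      have h0 : ∑ p : Σ j' : Fin m, Fin (n j'),
          c p • (Polynomial.aeval L q) (f p.1 p.2) = 0 := by
        have : (Polynomial.aeval L q) (∑ p : Σ j' : Fin m, Fin (n j'), c p • f p.1 p.2) = 0 := by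
          rw [hc, map_zero]
        rw [map_sum] at this
        simpa only [map_smul] using this
      -- per-term evaluation
      have hterm : ∀ (j' : Fin m) (i' : Fin (n j')),
          c ⟨j', i'⟩ • (Polynomial.aeval L q) (f j' i') =
          (if lam j' = lam j ∧ (i' : ℕ) = n j' - 1 - d ∧ d < n j' then a * c ⟨j', i'⟩ else 0)
            • e j' := by
        intro j' i'
        by_cases hlam : lam j' = lam j
        · -- same eigenvalue
          have hpowr : (Polynomial.aeval L q) (f j' i') =
              ((L - lam j • 1) ^ d) ((Polynomial.aeval L r) (f j' i')) := by
            rw [hq, map_mul, Module.End.mul_apply, aeval_sub_C_pow]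
          have hw := chain_aeval_triangular L (hchain j') r i'
          have haw : (Polynomial.aeval L r) (f j' i') =
              a • f j' i' + ((Polynomial.aeval L r) (f j' i') - r.eval (lam j') • f j' i') := by
            rw [hlam, heval]; abel
          have hpow : ((L - lam j • 1) ^ d) (f j' i') =
              if h : (i' : ℕ) + d < n j' then f j' ⟨(i' : ℕ) + d, h⟩ else 0 := by
            rw [← hlam]
            exact chain_pow_apply L (hchain j') d i'
          by_cases hdeep : (i' : ℕ) + d + 1 < n j'
          · -- coefficient already zero by induction hypothesis
            have hc0 : c ⟨j', i'⟩ = 0 := by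
              apply ih j' i'
              have := hNle j'
              omega
            simp [hc0]
          · -- kill the remainder w
            have hw0 : ((L - lam j • 1) ^ d)
                ((Polynomial.aeval L r) (f j' i') - r.eval (lam j') • f j' i') = 0 := by
              rw [← hlam]
              exact chainSpan_pow_kill L (hchain j') d ((i' : ℕ) + 1) (by omega) _ hw
            rw [hpowr, haw, map_add, map_smul, hw0, add_zero, hpow]
            by_cases hend : (i' : ℕ) + d < n j'
            · have hfe : f j' ⟨(i' : ℕ) + d, hend⟩ = e j' := by
                rw [he]
                congr 1
                apply Fin.ext
                simp only []
                omega
              rw [dif_pos hend, hfe, if_pos ⟨hlam, by omega, by omega⟩, smul_smul, mul_comm]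
            · rw [dif_neg hend, smul_zero, smul_zero, if_neg, zero_smul]
              rintro ⟨-, h2, h3⟩
              omega
        · -- different eigenvalue: whole chain is killed
          have hmem : j' ∈ Finset.univ.filter (fun j'' => lam j'' ≠ lam j) := by
            simp [hlam]
          have hq0 : (Polynomial.aeval L q) (f j' i') = 0 := by
            have hsplit : q = ((Polynomial.X - Polynomial.C (lam j)) ^ d *
                ∏ j'' ∈ (Finset.univ.filter (fun j'' => lam j'' ≠ lam j)).erase j',
                  (Polynomial.X - Polynomial.C (lam j'')) ^ (n j'')) *
                (Polynomial.X - Polynomial.C (lam j')) ^ (n j') := by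
              rw [hq, hr, ← Finset.mul_prod_erase _ _ hmem]
              ring
            rw [hsplit, map_mul, Module.End.mul_apply, aeval_sub_C_pow,
              chain_pow_apply L (hchain j') (n j') i', dif_neg (by omega), map_zero]
          rw [hq0, smul_zero, if_neg (fun h => hlam h.1), zero_smul]
      -- regroup the sum over sigma type
      have hsum : ∑ j' : Fin m, ∑ i' : Fin (n j'),
          (if lam j' = lam j ∧ (i' : ℕ) = n j' - 1 - d ∧ d < n j' then a * c ⟨j', i'⟩ else 0)
            • e j' = 0 := by
        rw [Finset.sum_sigma', Finset.univ_sigma_univ, ← h0]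
        apply Finset.sum_congr rfl
        intro p _
        exact (hterm p.1 p.2).symm
      have hinner : ∀ j' : Fin m,
          (∑ i' : Fin (n j'),
            (if lam j' = lam j ∧ (i' : ℕ) = n j' - 1 - d ∧ d < n j' then a * c ⟨j', i'⟩ else 0)
              • e j') =
          (if lam j' = lam j ∧ d < n j' then
            a * c ⟨j', ⟨n j' - 1 - d, by have := hn j'; omega⟩⟩ else 0) • e j' := by
        intro j'
        by_cases hA : lam j' = lam j ∧ d < n j'
        · rw [if_pos hA]
          rw [Finset.sum_eq_single (⟨n j' - 1 - d, by have := hn j'; omega⟩ : Fin (n j'))]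
          · rw [if_pos ⟨hA.1, rfl, hA.2⟩]
          · intro i' _ hne'
            rw [if_neg, zero_smul]
            rintro ⟨-, h2, -⟩
            exact hne' (Fin.ext h2)
          · intro h
            exact absurd (Finset.mem_univ _) h
        · rw [if_neg hA, zero_smul]
          apply Finset.sum_eq_zero
          intro i' _
          rw [if_neg, zero_smul]
          rintro ⟨h1, -, h3⟩
          exact hA ⟨h1, h3⟩
      rw [Finset.sum_congr rfl (fun j' _ => hinner j')] at hsum
      have hfin := Fintype.linearIndependent_iff.mp hind
        (fun j' => if lam j' = lam j ∧ d < n j' then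
          a * c ⟨j', ⟨n j' - 1 - d, by have := hn j'; omega⟩⟩ else 0) hsum j
      rw [if_pos ⟨rfl, by omega⟩] at hfin
      have hidx : (⟨n j - 1 - d, by have := hn j; omega⟩ : Fin (n j)) = i := by
        apply Fin.ext
        simp only []
        omega
      rw [hidx] at hfin
      exact (mul_eq_zero.mp hfin).resolve_left ha0
  intro p
  obtain ⟨j, i⟩ := p
  exact key Nmax j i (by omega)
end

section
/- Let λ, a_1, …, a_{k+1} ∈ ℂ and let A be the (k+1)×(k+1) complex matrix whose upper-left k×k block is the lower-triangular Jordan block J_k(λ), whose last column is zero except for the (k+1,k+1) entry a_{k+1}, and whose last row is (a_1, …, a_k, a_{k+1}). Then: (i) if a_{k+1} = λ and a_k ≠ 0, A is similar to the lower-triangular Jordan block J_{k+1}(λ); (ii) otherwise (i.e. if a_{k+1} ≠ λ or a_k = 0), A is similar to the block-diagonal matrix diag(J_k(λ), [a_{k+1}]) consisting of J_k(λ) and the 1×1 block [a_{k+1}]. -/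
/-- The `s × s` lower-triangular Jordan block with eigenvalue `lam`: diagonal entries `lam`,
entries `1` in positions `(i+1, i)`, all other entries `0`. -/
def jordanBlock (lam : ℂ) (s : ℕ) : Matrix (Fin s) (Fin s) ℂ :=
  Matrix.of fun i j => if (i : ℕ) = (j : ℕ) then lam else if (i : ℕ) = (j : ℕ) + 1 then 1 else 0

/-- Two square complex matrices are similar if `B = P * A * P⁻¹` for some invertible `P`. -/
def SimilarTo {m : Type*} [Fintype m] [DecidableEq m] (A B : Matrix m m ℂ) : Prop :=
  ∃ P : Matrix m m ℂ, IsUnit P.det ∧ B = P * A * P⁻¹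

lemma similar_of {m : Type*} [Fintype m] [DecidableEq m] (A B Q : Matrix m m ℂ)
    (hQ : IsUnit Q.det) (h : A * Q = Q * B) : SimilarTo A B := by
  refine ⟨Q⁻¹, Matrix.isUnit_nonsing_inv_det Q hQ, ?_⟩
  rw [Matrix.nonsing_inv_nonsing_inv Q hQ, mul_assoc, h, ← mul_assoc,
    Matrix.nonsing_inv_mul Q hQ, one_mul]

lemma similar_reindex_of {k : ℕ}
    (A' B' Q' : Matrix (Fin k ⊕ Fin 1) (Fin k ⊕ Fin 1) ℂ)
    (hQ : IsUnit Q'.det) (h : A' * Q' = Q' * B') :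
    SimilarTo (Matrix.reindex finSumFinEquiv finSumFinEquiv A')
      (Matrix.reindex finSumFinEquiv finSumFinEquiv B') := by
  apply similar_of _ _ (Matrix.reindex finSumFinEquiv finSumFinEquiv Q')
  · rwa [Matrix.det_reindex_self]
  · simp only [← Matrix.reindexAlgEquiv_apply ℂ ℂ, ← map_mul, h]

lemma sum_mul_jordan {k : ℕ} (lam : ℂ) (v : Fin k → ℂ) (j : Fin k) :
    ∑ i, v i * jordanBlock lam k i j
      = lam * v j + (if h : (j : ℕ) + 1 < k then v ⟨(j : ℕ) + 1, h⟩ else 0) := by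
  have key : ∀ i : Fin k, v i * jordanBlock lam k i j =
      (if i = j then lam * v j else 0) + (if (i : ℕ) = (j : ℕ) + 1 then v i else 0) := by
    intro i
    simp only [jordanBlock, Matrix.of_apply, Fin.ext_iff]
    split_ifs with h1 h2 h2
    · omega
    · obtain rfl : i = j := Fin.eq_of_val_eq h1
      ring
    · ring
    · ring
  rw [Finset.sum_congr rfl fun i _ => key i, Finset.sum_add_distrib]
  congr 1
  · simp [Finset.sum_ite_eq' Finset.univ j]
  · by_cases h : (j : ℕ) + 1 < k
    · rw [dif_pos h]
      have : ∀ i : Fin k, ((i : ℕ) = (j : ℕ) + 1) ↔ i = ⟨(j : ℕ) + 1, h⟩ := by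
        intro i; rw [Fin.ext_iff]
      simp_rw [this]
      simp [Finset.sum_ite_eq' Finset.univ (⟨(j : ℕ) + 1, h⟩ : Fin k)]
    · rw [dif_neg h]
      apply Finset.sum_eq_zero
      intro i _
      rw [if_neg]
      omega

lemma jordan_succ_blocks (lam : ℂ) (k : ℕ) (hk : 0 < k) :
    jordanBlock lam (k + 1) = Matrix.reindex finSumFinEquiv finSumFinEquiv
      (Matrix.fromBlocks (jordanBlock lam k) 0
        (Matrix.of fun (_ : Fin 1) (j : Fin k) => if (j : ℕ) = k - 1 then (1 : ℂ) else 0)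
        (Matrix.of fun (_ : Fin 1) (_ : Fin 1) => lam)) := by
  ext i j
  rw [Matrix.reindex_apply, Matrix.submatrix_apply]
  obtain ⟨p, rfl⟩ := finSumFinEquiv.surjective i
  obtain ⟨q, rfl⟩ := finSumFinEquiv.surjective j
  simp only [Equiv.symm_apply_apply]
  rcases p with p | p <;> rcases q with q | q <;>
    (try have hp := p.is_lt) <;> (try have hq := q.is_lt) <;>
    simp only [finSumFinEquiv_apply_left, finSumFinEquiv_apply_right,
      Matrix.fromBlocks_apply₁₁, Matrix.fromBlocks_apply₁₂, Matrix.fromBlocks_apply₂₁,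
      Matrix.fromBlocks_apply₂₂, jordanBlock, Matrix.of_apply, Matrix.zero_apply,
      Fin.coe_castAdd, Fin.coe_natAdd] <;>
    split_ifs <;> first | rfl | omega

lemma blocks_eq (k : ℕ) (lam d e s : ℂ) (r c C1 : Fin k → ℂ)
    (h : ∀ j : Fin k, r j + d * c j
      = (lam * c j + (if h : (j : ℕ) + 1 < k then c ⟨(j : ℕ) + 1, h⟩ else 0)) + s * C1 j)
    (h2 : d * s = s * e) :
    Matrix.fromBlocks (jordanBlock lam k) 0
        (Matrix.of fun (_ : Fin 1) j => r j) (Matrix.of fun (_ : Fin 1) (_ : Fin 1) => d)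
      * Matrix.fromBlocks 1 0
        (Matrix.of fun (_ : Fin 1) j => c j) (Matrix.of fun (_ : Fin 1) (_ : Fin 1) => s)
    = Matrix.fromBlocks 1 0
        (Matrix.of fun (_ : Fin 1) j => c j) (Matrix.of fun (_ : Fin 1) (_ : Fin 1) => s)
      * Matrix.fromBlocks (jordanBlock lam k) 0
        (Matrix.of fun (_ : Fin 1) j => C1 j) (Matrix.of fun (_ : Fin 1) (_ : Fin 1) => e) := by
  simp only [Matrix.fromBlocks_multiply, Matrix.mul_one, Matrix.one_mul, Matrix.mul_zero,
    Matrix.zero_mul, add_zero, zero_add]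
  apply Matrix.ext
  rintro (i | i) (j | j)
  · simp
  · simp
  · simp only [Matrix.fromBlocks_apply₂₁, Matrix.add_apply, Matrix.mul_apply,
      Fin.sum_univ_one, Matrix.of_apply]
    rw [sum_mul_jordan lam c j]
    exact h j
  · simp only [Matrix.fromBlocks_apply₂₂, Matrix.mul_apply, Fin.sum_univ_one, Matrix.of_apply]
    exact h2

/-- `chainC k a j = a (j-1)` for `j > 0`, and `0` for `j = 0`. -/
def chainC (k : ℕ) (a : Fin (k + 1) → ℂ) : Fin k → ℂ :=
  fun j => if h : 0 < (j : ℕ) then a ⟨(j : ℕ) - 1, by omega⟩ else 0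

lemma chainC_succ (k : ℕ) (a : Fin (k + 1) → ℂ) (j : ℕ) (h : j + 1 < k) :
    chainC k a ⟨j + 1, h⟩ = a ⟨j, by omega⟩ := by
  simp only [chainC]
  rw [dif_pos (by omega : 0 < j + 1)]
  congr 1

/-- downward recursion used in the `a_last ≠ λ` case. -/
noncomputable def caseG (k : ℕ) (a : Fin (k + 1) → ℂ) (mu : ℂ) : ℕ → ℂ
  | 0 => 0
  | m + 1 => (caseG k a mu m - a ⟨k - 1 - m, by omega⟩) * mu⁻¹

/-- Let `A` be the `(k+1) × (k+1)` matrix whose upper-left `k × k` block is the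
lower-triangular Jordan block `J_k(λ)`, whose last column is zero except for the bottom-right
entry `a (Fin.last k)`, and whose last row is `(a 0, …, a k)`.  If the bottom-right entry is `λ`
and the entry of the last row in column `k` (1-indexed: `a_k`) is nonzero, then `A` is similar to
`J_{k+1}(λ)`; otherwise `A` is similar to the block-diagonal matrix `diag (J_k(λ), [a_{k+1}])`. -/
theorem jordan_extend_one_row (k : ℕ) (hk : 0 < k) (lam : ℂ) (a : Fin (k + 1) → ℂ)
    (A : Matrix (Fin (k + 1)) (Fin (k + 1)) ℂ)
    (hA : A = Matrix.reindex finSumFinEquiv finSumFinEquiv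
      (Matrix.fromBlocks (jordanBlock lam k) 0
        (Matrix.of fun (_ : Fin 1) (j : Fin k) => a j.castSucc)
        (Matrix.of fun (_ : Fin 1) (_ : Fin 1) => a (Fin.last k)))) :
    ((a (Fin.last k) = lam ∧ a ⟨k - 1, by omega⟩ ≠ 0) →
        SimilarTo A (jordanBlock lam (k + 1))) ∧
    ((a (Fin.last k) ≠ lam ∨ a ⟨k - 1, by omega⟩ = 0) →
        SimilarTo A (Matrix.reindex finSumFinEquiv finSumFinEquiv
          (Matrix.fromBlocks (jordanBlock lam k) 0 0
            (Matrix.of fun (_ : Fin 1) (_ : Fin 1) => a (Fin.last k))))) := by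
  subst hA
  constructor
  · -- Case 1
    rintro ⟨hlast, hnz⟩
    rw [jordan_succ_blocks lam k hk]
    apply similar_reindex_of _ _
      (Matrix.fromBlocks 1 0
        (Matrix.of fun (_ : Fin 1) j => chainC k a j)
        (Matrix.of fun (_ : Fin 1) (_ : Fin 1) => a ⟨k - 1, by omega⟩))
    · rw [Matrix.det_fromBlocks_zero₁₂, Matrix.det_one, one_mul, Matrix.det_fin_one]
      exact isUnit_iff_ne_zero.2 hnz
    · apply blocks_eq k lam (a (Fin.last k)) lam (a ⟨k - 1, by omega⟩)
        (fun j => a j.castSucc) (chainC k a)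
        (fun j => if (j : ℕ) = k - 1 then (1 : ℂ) else 0)
      · intro j
        rw [hlast]
        by_cases hj : (j : ℕ) + 1 < k
        · rw [dif_pos hj, if_neg (by omega : ¬(j : ℕ) = k - 1), chainC_succ k a (j : ℕ) hj]
          have : a ⟨(j : ℕ), by omega⟩ = a j.castSucc := by
            congr 1
          rw [this]; ring
        · rw [dif_neg hj, if_pos (by omega : (j : ℕ) = k - 1)]
          have : a j.castSucc = a ⟨k - 1, by omega⟩ := by
            congr 1
            exact Fin.ext (by simp; omega)
          rw [this]; ring
      · rw [hlast]; ring
  · -- Case 2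
    intro hcase
    have h0 : (Matrix.of fun (_ : Fin 1) (j : Fin k) => (0 : ℂ))
        = (0 : Matrix (Fin 1) (Fin k) ℂ) := rfl
    by_cases hlast : a (Fin.last k) = lam
    · -- subcase: a_last = lam, so a_{k-1} = 0
      have hz : a ⟨k - 1, by omega⟩ = 0 := by
        rcases hcase with h | h
        · exact absurd hlast h
        · exact h
      apply similar_reindex_of _ _
        (Matrix.fromBlocks 1 0
          (Matrix.of fun (_ : Fin 1) j => chainC k a j)
          (Matrix.of fun (_ : Fin 1) (_ : Fin 1) => (1 : ℂ)))
      · rw [Matrix.det_fromBlocks_zero₁₂, Matrix.det_one, one_mul, Matrix.det_fin_one]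
        simp
      · rw [← h0]
        apply blocks_eq k lam (a (Fin.last k)) (a (Fin.last k)) 1
          (fun j => a j.castSucc) (chainC k a) (fun _ => (0 : ℂ))
        · intro j
          rw [hlast]
          by_cases hj : (j : ℕ) + 1 < k
          · rw [dif_pos hj, chainC_succ k a (j : ℕ) hj]
            have : a ⟨(j : ℕ), by omega⟩ = a j.castSucc := by
              congr 1
            rw [this]; ring
          · rw [dif_neg hj]
            have : a j.castSucc = a ⟨k - 1, by omega⟩ := by
              congr 1
              exact Fin.ext (by simp; omega)
            rw [this, hz]; ring
        · ring
    · -- subcase: a_last ≠ lam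
      set mu : ℂ := a (Fin.last k) - lam with hmu
      have hmu0 : mu ≠ 0 := sub_ne_zero.2 hlast
      have hd : a (Fin.last k) = lam + mu := by rw [hmu]; ring
      apply similar_reindex_of _ _
        (Matrix.fromBlocks 1 0
          (Matrix.of fun (_ : Fin 1) (j : Fin k) => caseG k a mu (k - (j : ℕ)))
          (Matrix.of fun (_ : Fin 1) (_ : Fin 1) => (1 : ℂ)))
      · rw [Matrix.det_fromBlocks_zero₁₂, Matrix.det_one, one_mul, Matrix.det_fin_one]
        simp
      · rw [← h0]
        apply blocks_eq k lam (a (Fin.last k)) (a (Fin.last k)) 1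
          (fun j => a j.castSucc) (fun j => caseG k a mu (k - (j : ℕ))) (fun _ => (0 : ℂ))
        · intro j
          have hj1 : k - (j : ℕ) = (k - 1 - (j : ℕ)) + 1 := by omega
          have hg : caseG k a mu (k - (j : ℕ))
              = (caseG k a mu (k - 1 - (j : ℕ)) - a j.castSucc) * mu⁻¹ := by
            rw [hj1]
            show (caseG k a mu (k - 1 - (j : ℕ))
              - a ⟨k - 1 - (k - 1 - (j : ℕ)), by omega⟩) * mu⁻¹ = _
            have : (⟨k - 1 - (k - 1 - (j : ℕ)), by omega⟩ : Fin (k + 1)) = j.castSucc := by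
              exact Fin.ext (by simp; omega)
            rw [this]
          have key : mu * ((caseG k a mu (k - 1 - (j : ℕ)) - a j.castSucc) * mu⁻¹)
              = caseG k a mu (k - 1 - (j : ℕ)) - a j.castSucc := by
            field_simp
          rw [hg]
          by_cases hj : (j : ℕ) + 1 < k
          · rw [dif_pos hj]
            have hnext : caseG k a mu (k - ((j : ℕ) + 1)) = caseG k a mu (k - 1 - (j : ℕ)) := by
              congr 1
              omega
            rw [hnext]
            linear_combination key + ((caseG k a mu (k - 1 - (j : ℕ)) - a j.castSucc) * mu⁻¹) * hd
          · rw [dif_neg hj]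
            have hm0 : k - 1 - (j : ℕ) = 0 := by omega
            rw [hm0] at key ⊢
            have hg0 : caseG k a mu 0 = 0 := rfl
            rw [hg0] at key ⊢
            linear_combination key + ((0 - a j.castSucc) * mu⁻¹) * hd
        · ring
end

section
/- Let λ ∈ ℂ and let n ≤ k be positive integers. Let A be the (n+k+1)×(n+k+1) complex matrix whose upper-left (n+k)×(n+k) block is the block-diagonal matrix diag(J_n(λ), J_k(λ)), whose last column is zero except for the bottom entry λ, and whose last row has the entry 1 in columns n and n+k, the entry λ in column n+k+1, and 0 in all other positions. Then A is similar to the block-diagonal matrix diag(J_n(λ), J_{k+1}(λ)), i.e. to the direct sum of a λ-Jordan block of length n and a λ-Jordan block of length k+1. -/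
/-- Entry function of the matrix `A` in the theorem. -/
def jtbeA (n k : ℕ) (lam : ℂ) (i j : ℕ) : ℂ :=
  if i = j then lam
  else if i = n + k then (if j = n - 1 ∨ j = n + k - 1 then 1 else 0)
  else if i = j + 1 ∧ i ≠ n then 1 else 0

/-- Entry function of the target matrix `B` in the theorem. -/
def jtbeB (n k : ℕ) (lam : ℂ) (i j : ℕ) : ℂ :=
  if i = j then lam else if i = j + 1 ∧ i ≠ n then 1 else 0

/-- The nilpotent part of the change-of-basis matrix. -/
def jtbeS (n k : ℕ) : Matrix (Fin (n + k + 1)) (Fin (n + k + 1)) ℂ :=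
  Matrix.of fun i j => if (i : ℕ) = k + (j : ℕ) ∧ (j : ℕ) < n then 1 else 0

lemma jtbe_sum1 (N n k : ℕ) (f : ℕ → ℂ) (i : Fin N) :
    (∑ m : Fin N, if (i : ℕ) = k + (m : ℕ) ∧ (m : ℕ) < n then f (m : ℕ) else 0)
      = if k ≤ (i : ℕ) ∧ (i : ℕ) < k + n then f ((i : ℕ) - k) else 0 := by
  split_ifs with h
  · have hlt : (i : ℕ) - k < N := by have := i.isLt; omega
    rw [Finset.sum_eq_single (⟨(i : ℕ) - k, hlt⟩ : Fin N)]
    · simp only [Fin.val_mk]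
      rw [if_pos (by omega)]
    · intro m _ hm
      rw [if_neg]
      rintro ⟨h1, h2⟩
      exact hm (Fin.ext (by simp only [Fin.val_mk]; omega))
    · simp
  · exact Finset.sum_eq_zero fun m _ => by
      rw [if_neg]; rintro ⟨h1, h2⟩; have := m.isLt; omega

lemma jtbe_sum2 (N n k : ℕ) (hN : k + n ≤ N) (f : ℕ → ℂ) (j : Fin N) :
    (∑ m : Fin N, if (m : ℕ) = k + (j : ℕ) ∧ (j : ℕ) < n then f (m : ℕ) else 0)
      = if (j : ℕ) < n then f (k + (j : ℕ)) else 0 := by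
  split_ifs with h
  · have hlt : k + (j : ℕ) < N := by omega
    rw [Finset.sum_eq_single (⟨k + (j : ℕ), hlt⟩ : Fin N)]
    · rw [if_pos ⟨rfl, h⟩]
    · intro m _ hm
      rw [if_neg]
      rintro ⟨h1, h2⟩
      exact hm (Fin.ext (by simp only [Fin.val_mk]; omega))
    · simp
  · exact Finset.sum_eq_zero fun m _ => by
      rw [if_neg]; rintro ⟨h1, h2⟩; omega

set_option maxHeartbeats 1000000 in
lemma jtbe_key (n k : ℕ) (hn : 0 < n) (hnk : n ≤ k) (lam : ℂ) (i j : ℕ)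
    (hi : i < n + k + 1) (hj : j < n + k + 1) :
    jtbeA n k lam i j + (if k ≤ i ∧ i < k + n then jtbeA n k lam (i - k) j else 0)
      = jtbeB n k lam i j + (if j < n then jtbeB n k lam i (k + j) else 0) := by
  unfold jtbeA jtbeB
  split_ifs <;> first | ring1 | (exfalso; omega)

/-- Let `1 ≤ n ≤ k` and let `A` be the `(n+k+1) × (n+k+1)` matrix whose
upper-left `(n+k) × (n+k)` block is `diag (J_n(λ), J_k(λ))`, whose last column is zero except
for the bottom entry `λ`, and whose last row has the entry `1` in columns `n` and `n+k`
(1-indexed), the entry `λ` in the last column, and `0` elsewhere.  Then `A` is similar to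
`diag (J_n(λ), J_{k+1}(λ))`. -/
theorem jordan_two_blocks_extend (n k : ℕ) (hn : 0 < n) (hnk : n ≤ k) (lam : ℂ)
    (A : Matrix (Fin (n + k + 1)) (Fin (n + k + 1)) ℂ)
    (hA : A = Matrix.reindex finSumFinEquiv finSumFinEquiv
      (Matrix.fromBlocks
        (Matrix.reindex finSumFinEquiv finSumFinEquiv
          (Matrix.fromBlocks (jordanBlock lam n) 0 0 (jordanBlock lam k)))
        0
        (Matrix.of fun (_ : Fin 1) (j : Fin (n + k)) =>
          if (j : ℕ) = n - 1 ∨ (j : ℕ) = n + k - 1 then (1 : ℂ) else 0)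
        (Matrix.of fun (_ : Fin 1) (_ : Fin 1) => lam))) :
    SimilarTo A (Matrix.reindex (finSumFinEquiv (m := n) (n := k + 1))
      (finSumFinEquiv (m := n) (n := k + 1))
      (Matrix.fromBlocks (jordanBlock lam n) 0 0 (jordanBlock lam (k + 1)))) := by
  set S := jtbeS n k with hSdef
  set Amat : Matrix (Fin (n + k + 1)) (Fin (n + k + 1)) ℂ :=
    Matrix.of fun i j => jtbeA n k lam (i : ℕ) (j : ℕ) with hAmat
  set Bmat : Matrix (Fin (n + k + 1)) (Fin (n + k + 1)) ℂ :=
    Matrix.of fun i j => jtbeB n k lam (i : ℕ) (j : ℕ) with hBmat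
  -- A equals the explicit entry matrix
  have hA' : A = Amat := by
    subst hA
    ext i j
    obtain ⟨x, rfl⟩ := finSumFinEquiv.surjective i
    obtain ⟨y, rfl⟩ := finSumFinEquiv.surjective j
    simp only [Matrix.reindex_apply, Matrix.submatrix_apply, Equiv.symm_apply_apply]
    rcases x with x | x <;> rcases y with y | y
    · obtain ⟨x, rfl⟩ := finSumFinEquiv.surjective x
      obtain ⟨y, rfl⟩ := finSumFinEquiv.surjective y
      rcases x with x | x <;> rcases y with y | y <;>
        simp only [Matrix.fromBlocks_apply₁₁, Matrix.fromBlocks_apply₁₂,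
          Matrix.fromBlocks_apply₂₁, Matrix.fromBlocks_apply₂₂,
          Matrix.reindex_apply, Matrix.submatrix_apply, Equiv.symm_apply_apply,
          finSumFinEquiv_apply_left, finSumFinEquiv_apply_right,
          finSumFinEquiv_symm_apply_castAdd, finSumFinEquiv_symm_apply_natAdd,
          jordanBlock, jtbeA, hAmat, Matrix.of_apply, Matrix.zero_apply,
          Fin.coe_castAdd, Fin.coe_natAdd] <;>
        split_ifs <;> first | rfl | (exfalso; omega)
    · obtain ⟨x, rfl⟩ := finSumFinEquiv.surjective x
      rcases x with x | x <;>
        simp only [Matrix.fromBlocks_apply₁₁, Matrix.fromBlocks_apply₁₂,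
          Matrix.fromBlocks_apply₂₁, Matrix.fromBlocks_apply₂₂,
          finSumFinEquiv_apply_left, finSumFinEquiv_apply_right,
          finSumFinEquiv_symm_apply_castAdd, finSumFinEquiv_symm_apply_natAdd,
          jtbeA, hAmat, Matrix.of_apply, Matrix.zero_apply,
          Fin.coe_castAdd, Fin.coe_natAdd, Fin.val_eq_zero] <;>
        split_ifs <;> first | rfl | (exfalso; omega)
    · obtain ⟨y, rfl⟩ := finSumFinEquiv.surjective y
      rcases y with y | y <;>
        simp only [Matrix.fromBlocks_apply₁₁, Matrix.fromBlocks_apply₁₂,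
          Matrix.fromBlocks_apply₂₁, Matrix.fromBlocks_apply₂₂,
          finSumFinEquiv_apply_left, finSumFinEquiv_apply_right,
          finSumFinEquiv_symm_apply_castAdd, finSumFinEquiv_symm_apply_natAdd,
          jtbeA, hAmat, Matrix.of_apply, Matrix.zero_apply,
          Fin.coe_castAdd, Fin.coe_natAdd, Fin.val_eq_zero] <;>
        split_ifs <;> first | rfl | (exfalso; omega)
    · simp only [Matrix.fromBlocks_apply₂₂, jtbeA, hAmat, Matrix.of_apply,
        finSumFinEquiv_apply_right, Fin.coe_natAdd, Fin.val_eq_zero] <;>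
      split_ifs <;> first | rfl | (exfalso; omega)
  -- the target equals the explicit entry matrix
  have hB : (Matrix.reindex (finSumFinEquiv (m := n) (n := k + 1))
      (finSumFinEquiv (m := n) (n := k + 1))
      (Matrix.fromBlocks (jordanBlock lam n) 0 0 (jordanBlock lam (k + 1)))) = Bmat := by
    ext i j
    obtain ⟨x, rfl⟩ := finSumFinEquiv.surjective i
    obtain ⟨y, rfl⟩ := finSumFinEquiv.surjective j
    simp only [Matrix.reindex_apply, Matrix.submatrix_apply, Equiv.symm_apply_apply]
    rcases x with x | x <;> rcases y with y | y <;>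
      simp only [Matrix.fromBlocks_apply₁₁, Matrix.fromBlocks_apply₁₂,
        Matrix.fromBlocks_apply₂₁, Matrix.fromBlocks_apply₂₂,
        finSumFinEquiv_apply_left, finSumFinEquiv_apply_right,
          finSumFinEquiv_symm_apply_castAdd, finSumFinEquiv_symm_apply_natAdd,
        jordanBlock, jtbeB, hBmat, Matrix.of_apply, Matrix.zero_apply,
        Fin.coe_castAdd, Fin.coe_natAdd] <;>
      split_ifs <;> first | rfl | (exfalso; omega)
  -- S is square-zero
  have hS2 : S * S = 0 := by
    ext i j
    rw [Matrix.mul_apply]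
    refine Finset.sum_eq_zero fun m _ => ?_
    simp only [hSdef, jtbeS, Matrix.of_apply]
    split_ifs with h1 h2 <;> first | (exfalso; omega) | simp
  have hPQ : (1 + S) * (1 - S) = 1 := by
    have h : (1 + S) * (1 - S) = 1 - S * S := by noncomm_ring
    rw [h, hS2, sub_zero]
  -- the key intertwining identity
  have hkey : (1 + S) * Amat = Bmat * (1 + S) := by
    ext i j
    simp only [Matrix.add_mul, Matrix.mul_add, Matrix.one_mul, Matrix.mul_one, Matrix.add_apply]
    rw [Matrix.mul_apply, Matrix.mul_apply]
    have h1 : (∑ m, S i m * Amat m j)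
        = if k ≤ (i : ℕ) ∧ (i : ℕ) < k + n then jtbeA n k lam ((i : ℕ) - k) (j : ℕ) else 0 := by
      refine Eq.trans (Finset.sum_congr rfl fun m _ => ?_)
        (jtbe_sum1 (n + k + 1) n k (fun t => jtbeA n k lam t (j : ℕ)) i)
      simp only [hSdef, jtbeS, hAmat, Matrix.of_apply, ite_mul, one_mul, zero_mul]
    have h2 : (∑ m, Bmat i m * S m j)
        = if (j : ℕ) < n then jtbeB n k lam (i : ℕ) (k + (j : ℕ)) else 0 := by
      refine Eq.trans (Finset.sum_congr rfl fun m _ => ?_)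
        (jtbe_sum2 (n + k + 1) n k (by omega) (fun t => jtbeB n k lam (i : ℕ) t) j)
      simp only [hSdef, jtbeS, hBmat, Matrix.of_apply, mul_ite, mul_one, mul_zero]
    rw [h1, h2]
    simpa only [hAmat, hBmat, Matrix.of_apply] using
      jtbe_key n k hn hnk lam (i : ℕ) (j : ℕ) i.isLt j.isLt
  refine ⟨1 + S, Matrix.isUnit_det_of_right_inverse hPQ, ?_⟩
  rw [Matrix.inv_eq_right_inv hPQ, hA', hB, hkey, Matrix.mul_assoc, hPQ, Matrix.mul_one]
end

section
/- Let C be an n×n complex matrix, E an (N−n)×(N−n) complex matrix, D an (N−n)×n complex matrix, and let A be the N×N block lower-triangular matrix A = [[C, 0], [D, E]]. Then for every λ ∈ ℂ and every integer ℓ ≥ 1, dim ker((C − λ I_n)^ℓ) − dim ker((C − λ I_n)^{ℓ−1}) ≤ dim ker((A − λ I_N)^ℓ) − dim ker((A − λ I_N)^{ℓ−1}). (For any square matrix M, the quantity dim ker((M − λ)^ℓ) − dim ker((M − λ)^{ℓ−1}) is the number of Jordan blocks of M with eigenvalue λ and length at least ℓ; hence this inequality for all λ and ℓ is equivalent to the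 existence of an injection from the Jordan blocks of C into the Jordan blocks of A that preserves the eigenvalue and does not decrease the length.) -/
open Matrix Module LinearMap

/-- The extension-by-zero map into the first block. -/
private noncomputable def iotaL (n m : ℕ) : ((Fin n → ℂ)) →ₗ[ℂ] ((Fin n ⊕ Fin m) → ℂ) where
  toFun x := Sum.elim x 0
  map_add' x y := by funext i; cases i <;> simp
  map_smul' c x := by funext i; cases i <;> simp

private lemma iotaL_inj (n m : ℕ) : Function.Injective (iotaL n m) := by
  intro x y h
  funext i
  have := congrFun h (Sum.inl i)
  simpa [iotaL] using this

private lemma mulVec_pow_iota {n m : ℕ} (P : Matrix (Fin n) (Fin n) ℂ)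
    (Q : Matrix (Fin n) (Fin m) ℂ) (R : Matrix (Fin m) (Fin m) ℂ) (k : ℕ) (x : Fin n → ℂ) :
    ((Matrix.fromBlocks P Q 0 R) ^ k) *ᵥ (Sum.elim x 0) = Sum.elim ((P ^ k) *ᵥ x) 0 := by
  induction k with
  | zero => simp
  | succ k ih =>
    rw [pow_succ', pow_succ', ← Matrix.mulVec_mulVec, ih, ← Matrix.mulVec_mulVec]
    simp [Matrix.fromBlocks_mulVec]

/-- kernel/intersection identification. -/
private lemma map_ker_eq {n m : ℕ} (P : Matrix (Fin n) (Fin n) ℂ)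
    (Q : Matrix (Fin n) (Fin m) ℂ) (R : Matrix (Fin m) (Fin m) ℂ) (k : ℕ) :
    Submodule.map (iotaL n m) (LinearMap.ker ((P ^ k).mulVecLin)) =
      LinearMap.range (iotaL n m) ⊓ LinearMap.ker (((Matrix.fromBlocks P Q 0 R) ^ k).mulVecLin) := by
  ext y
  simp only [Submodule.mem_map, Submodule.mem_inf, LinearMap.mem_range, LinearMap.mem_ker,
    Matrix.mulVecLin_apply]
  constructor
  · rintro ⟨x, hx, rfl⟩
    refine ⟨⟨x, rfl⟩, ?_⟩
    show ((Matrix.fromBlocks P Q 0 R) ^ k) *ᵥ (Sum.elim x 0) = 0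
    rw [mulVec_pow_iota]
    show Sum.elim _ _ = _
    rw [hx]
    funext i; cases i <;> rfl
  · rintro ⟨⟨x, rfl⟩, hker⟩
    refine ⟨x, ?_, rfl⟩
    have h2 : ((Matrix.fromBlocks P Q 0 R) ^ k) *ᵥ (Sum.elim x 0) = Sum.elim ((P ^ k) *ᵥ x) 0 :=
      mulVec_pow_iota P Q R k x
    have : (Sum.elim ((P ^ k) *ᵥ x) 0 : (Fin n ⊕ Fin m) → ℂ) = 0 := by
      rw [← h2]; exact hker
    funext i
    exact congrFun this (Sum.inl i)

/-- general subspace inequality. -/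
private lemma finrank_inf_ineq {V : Type*} [AddCommGroup V] [Module ℂ V]
    [FiniteDimensional ℂ V] (W U₁ U₂ : Submodule ℂ V) (h : U₁ ≤ U₂) :
    finrank ℂ (W ⊓ U₂ : Submodule ℂ V) + finrank ℂ U₁ ≤
      finrank ℂ U₂ + finrank ℂ (W ⊓ U₁ : Submodule ℂ V) := by
  have key := Submodule.finrank_sup_add_finrank_inf_eq U₁ (W ⊓ U₂)
  have h1 : U₁ ⊓ (W ⊓ U₂) = W ⊓ U₁ := by
    ext v
    simp only [Submodule.mem_inf]
    exact ⟨fun ⟨a, b, _⟩ => ⟨b, a⟩, fun ⟨b, a⟩ => ⟨a, b, h a⟩⟩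
  have h2 : finrank ℂ (U₁ ⊔ (W ⊓ U₂) : Submodule ℂ V) ≤ finrank ℂ U₂ := by
    apply Submodule.finrank_mono
    exact sup_le h inf_le_right
  rw [h1] at key
  omega

/-- Main lemma for block upper triangular matrices, kernel form. -/
private lemma ker_ineq {n m : ℕ} (P : Matrix (Fin n) (Fin n) ℂ)
    (Q : Matrix (Fin n) (Fin m) ℂ) (R : Matrix (Fin m) (Fin m) ℂ) (ℓ : ℕ) (hℓ : 1 ≤ ℓ) :
    (finrank ℂ (LinearMap.ker ((P ^ ℓ).mulVecLin)) : ℤ) -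
      finrank ℂ (LinearMap.ker ((P ^ (ℓ - 1)).mulVecLin)) ≤
    (finrank ℂ (LinearMap.ker (((Matrix.fromBlocks P Q 0 R) ^ ℓ).mulVecLin)) : ℤ) -
      finrank ℂ (LinearMap.ker (((Matrix.fromBlocks P Q 0 R) ^ (ℓ - 1)).mulVecLin)) := by
  set M := Matrix.fromBlocks P Q 0 R with hM
  set W := LinearMap.range (iotaL n m)
  have hkerP : ∀ k, finrank ℂ (LinearMap.ker ((P ^ k).mulVecLin)) =
      finrank ℂ (W ⊓ LinearMap.ker ((M ^ k).mulVecLin) : Submodule ℂ _) := by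
    intro k
    rw [← map_ker_eq P Q R k]
    exact (LinearEquiv.finrank_eq
      (Submodule.equivMapOfInjective _ (iotaL_inj n m) _))
  have hsub : LinearMap.ker ((M ^ (ℓ - 1)).mulVecLin) ≤ LinearMap.ker ((M ^ ℓ).mulVecLin) := by
    intro v hv
    simp only [LinearMap.mem_ker, Matrix.mulVecLin_apply] at hv ⊢
    have : ℓ = (ℓ - 1) + 1 := by omega
    rw [this, pow_succ', ← Matrix.mulVec_mulVec, hv, Matrix.mulVec_zero]
  have key := finrank_inf_ineq W (LinearMap.ker ((M ^ (ℓ - 1)).mulVecLin))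
    (LinearMap.ker ((M ^ ℓ).mulVecLin)) hsub
  rw [hkerP ℓ, hkerP (ℓ - 1)]
  omega

private lemma finrank_ker_eq_card_sub_rank {k : Type*} [Fintype k] [DecidableEq k]
    (X : Matrix k k ℂ) :
    X.rank + finrank ℂ (LinearMap.ker X.mulVecLin) = Fintype.card k := by
  have := LinearMap.finrank_range_add_finrank_ker X.mulVecLin
  rw [Module.finrank_pi] at this
  exact this

/-- For the block lower-triangular matrix `A = [[C, 0], [D, E]]` (with `C` of
size `n × n` and `E` of size `m × m`, so `A` has size `N × N` with `N = n + m`), for every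
`λ ∈ ℂ` and every `ℓ ≥ 1`, the number of Jordan blocks of `C` with eigenvalue `λ` and length at
least `ℓ`, namely `dim ker (C - λ)^ℓ - dim ker (C - λ)^(ℓ-1)`, is at most the corresponding
number for `A`. -/
theorem jordan_block_count_le_of_block_triangular (n m : ℕ)
    (C : Matrix (Fin n) (Fin n) ℂ) (E : Matrix (Fin m) (Fin m) ℂ)
    (D : Matrix (Fin m) (Fin n) ℂ)
    (A : Matrix (Fin (n + m)) (Fin (n + m)) ℂ)
    (hA : A = Matrix.reindex finSumFinEquiv finSumFinEquiv (Matrix.fromBlocks C 0 D E))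
    (lam : ℂ) (ℓ : ℕ) (hℓ : 1 ≤ ℓ) :
    (Module.finrank ℂ ↥(LinearMap.ker (((C - lam • 1) ^ ℓ).mulVecLin)) : ℤ) -
      (Module.finrank ℂ ↥(LinearMap.ker (((C - lam • 1) ^ (ℓ - 1)).mulVecLin)) : ℤ) ≤
    (Module.finrank ℂ ↥(LinearMap.ker (((A - lam • 1) ^ ℓ).mulVecLin)) : ℤ) -
      (Module.finrank ℂ ↥(LinearMap.ker (((A - lam • 1) ^ (ℓ - 1)).mulVecLin)) : ℤ) := by
  -- Reduce A to the block matrix via reindex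
  set B := Matrix.fromBlocks C 0 D E with hB
  have hAsub : A - lam • 1 =
      Matrix.reindex finSumFinEquiv finSumFinEquiv (B - lam • 1) := by
    rw [hA, Matrix.reindex_apply, Matrix.reindex_apply]
    ext i j
    simp [Matrix.one_apply, EmbeddingLike.apply_eq_iff_eq]
  -- rank of powers of A equals rank of powers of B - lam • 1
  have hpow : ∀ k : ℕ, ((A - lam • 1) ^ k).rank = ((B - lam • 1) ^ k).rank := by
    intro k
    have : (A - lam • 1) ^ k =
        Matrix.reindex finSumFinEquiv finSumFinEquiv ((B - lam • 1) ^ k) := by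
      rw [hAsub]
      exact (map_pow (Matrix.reindexAlgEquiv ℂ ℂ finSumFinEquiv) (B - lam • 1) k).symm
    rw [this, Matrix.reindex_apply, Matrix.rank_submatrix]
  -- B - lam • 1 as block matrix
  have hBsub : B - lam • 1 = Matrix.fromBlocks (C - lam • 1) 0 D (E - lam • 1) := by
    rw [hB]
    ext i j
    rcases i with i | i <;> rcases j with j | j <;>
      simp [Matrix.one_apply, Sum.inl.injEq, Sum.inr.injEq]
  -- transpose
  set P := (C - lam • 1)ᵀ with hP
  have hrankC : ∀ k : ℕ, ((C - lam • 1) ^ k).rank = (P ^ k).rank := by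
    intro k
    rw [hP, ← Matrix.transpose_pow, Matrix.rank_transpose]
  have hrankB : ∀ k : ℕ, ((B - lam • 1) ^ k).rank
      = ((Matrix.fromBlocks P Dᵀ 0 (E - lam • 1)ᵀ) ^ k).rank := by
    intro k
    rw [hBsub, ← Matrix.rank_transpose, Matrix.transpose_pow, Matrix.fromBlocks_transpose]
    simp [hP]
  -- assemble via ranks
  have key := ker_ineq P Dᵀ ((E - lam • 1)ᵀ) ℓ hℓ
  have e1 := finrank_ker_eq_card_sub_rank ((C - lam • 1) ^ ℓ)
  have e2 := finrank_ker_eq_card_sub_rank ((C - lam • 1) ^ (ℓ - 1))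
  have e3 := finrank_ker_eq_card_sub_rank ((A - lam • 1) ^ ℓ)
  have e4 := finrank_ker_eq_card_sub_rank ((A - lam • 1) ^ (ℓ - 1))
  have f1 := finrank_ker_eq_card_sub_rank (P ^ ℓ)
  have f2 := finrank_ker_eq_card_sub_rank (P ^ (ℓ - 1))
  have f3 := finrank_ker_eq_card_sub_rank ((Matrix.fromBlocks P Dᵀ 0 (E - lam • 1)ᵀ) ^ ℓ)
  have f4 := finrank_ker_eq_card_sub_rank ((Matrix.fromBlocks P Dᵀ 0 (E - lam • 1)ᵀ) ^ (ℓ - 1))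
  have hr1 := hrankC ℓ
  have hr2 := hrankC (ℓ - 1)
  have hr3 : ((A - lam • 1) ^ ℓ).rank
      = ((Matrix.fromBlocks P Dᵀ 0 (E - lam • 1)ᵀ) ^ ℓ).rank := by
    rw [hpow, hrankB]
  have hr4 : ((A - lam • 1) ^ (ℓ - 1)).rank
      = ((Matrix.fromBlocks P Dᵀ 0 (E - lam • 1)ᵀ) ^ (ℓ - 1)).rank := by
    rw [hpow, hrankB]
  simp only [Fintype.card_fin, Fintype.card_sum] at e1 e2 e3 e4 f1 f2 f3 f4
  omega
end

section
/- Let B be an invertible n×n complex matrix all of whose eigenvalues have modulus strictly less than 1, let k ≥ 2 be an integer, and let A be an n×n complex matrix satisfying A·B = B^k·A. Then A is not invertible (det A = 0). -/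
open scoped NNReal

lemma multiset_prod_le_one (s : Multiset ℝ≥0) (h : ∀ x ∈ s, x ≤ 1) : s.prod ≤ 1 := by
  induction s using Multiset.induction with
  | empty => simp
  | cons a t ih =>
    rw [Multiset.prod_cons]
    calc a * t.prod ≤ 1 * 1 :=
          mul_le_mul' (h a (Multiset.mem_cons_self a t))
            (ih fun x hx => h x (Multiset.mem_cons_of_mem hx))
      _ = 1 := one_mul 1

lemma multiset_prod_lt_one (s : Multiset ℝ≥0) (hs : s ≠ 0)
    (h : ∀ x ∈ s, x < 1) : s.prod < 1 := by
  obtain ⟨a, ha⟩ := Multiset.exists_mem_of_ne_zero hs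
  obtain ⟨t, rfl⟩ := Multiset.exists_cons_of_mem ha
  have ht : t.prod ≤ 1 := multiset_prod_le_one t fun x hx => (h x (Multiset.mem_cons_of_mem hx)).le
  calc (a ::ₘ t).prod = a * t.prod := Multiset.prod_cons a t
    _ ≤ a * 1 := mul_le_mul_right ht a
    _ = a := mul_one a
    _ < 1 := h a (Multiset.mem_cons_self a t)

/-- If `B` is an invertible `n × n` complex matrix (`n ≥ 1`) all of whose
eigenvalues (roots of the characteristic polynomial) have modulus strictly less than `1`,
`k ≥ 2`, and `A * B = B ^ k * A`, then `A` is singular. -/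
theorem not_invertible_of_semiconj_pow (n : ℕ) (hn : 0 < n)
    (B A : Matrix (Fin n) (Fin n) ℂ)
    (hB : IsUnit B.det)
    (heig : ∀ μ : ℂ, (Matrix.charpoly B).IsRoot μ → ‖μ‖ < 1)
    (k : ℕ) (hk : 2 ≤ k)
    (hAB : A * B = B ^ k * A) :
    A.det = 0 := by
  by_contra hA
  have h1 : A.det * B.det = A.det * B.det ^ k := by
    have := congrArg Matrix.det hAB
    rw [Matrix.det_mul, Matrix.det_mul, Matrix.det_pow] at this
    rw [this]; ring
  have h2 : B.det = B.det ^ k := mul_left_cancel₀ hA h1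
  have hdet : B.det = (Matrix.charpoly B).roots.prod :=
    Matrix.det_eq_prod_roots_charpoly B
  have hne : Matrix.charpoly B ≠ 0 := (Matrix.charpoly_monic B).ne_zero
  have hdeg : (Matrix.charpoly B).natDegree = n := by
    simp [Matrix.charpoly_natDegree_eq_dim B]
  have hroots : (Matrix.charpoly B).roots ≠ 0 := by
    have hdegne : (Matrix.charpoly B).degree ≠ 0 := by
      rw [Polynomial.degree_eq_natDegree hne, hdeg]
      exact_mod_cast hn.ne'
    obtain ⟨μ, hμ⟩ := IsAlgClosed.exists_root _ hdegne
    intro h0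
    have : μ ∈ (Matrix.charpoly B).roots := (Polynomial.mem_roots hne).mpr hμ
    rw [h0] at this
    exact absurd this (Multiset.notMem_zero μ)
  -- nnnorm of det
  have hnorm : ‖B.det‖₊ = ((Matrix.charpoly B).roots.map (‖·‖₊)).prod := by
    rw [hdet]
    exact map_multiset_prod (nnnormHom : ℂ →*₀ ℝ≥0) _
  have hlt : ‖B.det‖₊ < 1 := by
    rw [hnorm]
    apply multiset_prod_lt_one
    · simpa using hroots
    · intro x hx
      obtain ⟨μ, hμ, rfl⟩ := Multiset.mem_map.mp hx
      have := heig μ ((Polynomial.mem_roots hne).mp hμ)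
      exact_mod_cast this
  have hne0 : (0:ℝ≥0) < ‖B.det‖₊ := by
    simp [pos_iff_ne_zero, hB.ne_zero]
  have hpow : ‖B.det‖₊ = ‖B.det‖₊ ^ k := by
    conv_lhs => rw [h2]
    simp
  have : ‖B.det‖₊ ^ k < ‖B.det‖₊ ^ 1 :=
    pow_lt_pow_right_of_lt_one₀ hne0 hlt (by omega)
  rw [← hpow, pow_one] at this
  exact lt_irrefl _ this
end

section
/- Let H be a separable infinite-dimensional complex Hilbert space with a Hilbert basis (e_i)_{i∈ℕ}, and let C : H → H be a compact linear operator that is lower triangular with respect to this basis, i.e. ⟨C e_j, e_i⟩ = 0 whenever i < j. Fix N ∈ ℕ, let H₁ be the span of e_0,…,e_{N−1} and H₂ the closed span of {e_i : i ≥ N} (lower triangularity makes H₂ invariant under C), let P be the orthogonal projection of H onto H₁, and let U : H₁ → H₁ be the compression U x = P(C x). Let λ ∈ ℂ with λ ≠ 0 and suppose ‖C|_{H₂}‖ < |λ|, where C|_{H₂} is the restriction of C to H₂. Then the map x ↦ P x restricts to a linear bijection from ker(C − λ I) onto ker(U − λ id_{H₁}); in particular, every x₁ ∈ ker(U − λ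 id_{H₁}) has a unique completion x ∈ ker(C − λ I) with P x = x₁. -/
open scoped ComplexInnerProductSpace

/-- Let `C` be a compact operator on a separable infinite-dimensional complex
Hilbert space `H`, lower triangular with respect to a Hilbert basis `(e_i)_{i ∈ ℕ}`.  Fix `N`,
let `H₁` be the span of `e_0, …, e_{N-1}`, `H₂` the closed span of `{e_i : i ≥ N}`, `P` the
orthogonal projection onto `H₁` (given by `P x = ∑_{i < N} ⟪e_i, x⟫ e_i`), and
`U : H₁ → H₁` the compression `U x = P (C x)`.  If `λ ≠ 0` and `‖C|_{H₂}‖ < |λ|` (i.e. there is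
`r < |λ|` with `‖C x‖ ≤ r ‖x‖` for all `x ∈ H₂`), then `x ↦ P x` is a bijection from
`ker (C - λ I)` onto `ker (U - λ id_{H₁}) = {y ∈ H₁ : P (C y) = λ y}`; in particular every
element of the latter kernel has a unique completion in `ker (C - λ I)`. -/
theorem projection_bijOn_kernels
    {H : Type*} [NormedAddCommGroup H] [InnerProductSpace ℂ H] [CompleteSpace H]
    (e : HilbertBasis ℕ ℂ H) (C : H →L[ℂ] H)
    (hcpt : IsCompactOperator (⇑C))
    (htri : ∀ i j : ℕ, i < j → ⟪C (e j), e i⟫ = 0)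
    (N : ℕ)
    (P : H →L[ℂ] H)
    (hP : P = ∑ i ∈ Finset.range N, (innerSL ℂ (e i)).smulRight (e i))
    (lam : ℂ) (hlam : lam ≠ 0)
    (hW : ∃ r : ℝ, r < ‖lam‖ ∧
      ∀ x ∈ (Submodule.span ℂ (⇑e '' {i : ℕ | N ≤ i})).topologicalClosure, ‖C x‖ ≤ r * ‖x‖) :
    Set.BijOn (⇑P) {x : H | C x = lam • x}
      {y : H | y ∈ Submodule.span ℂ (⇑e '' {i : ℕ | i < N}) ∧ P (C y) = lam • y} ∧
    ∀ y : H, y ∈ Submodule.span ℂ (⇑e '' {i : ℕ | i < N}) → P (C y) = lam • y →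
      ∃! x : H, C x = lam • x ∧ P x = y := by
  obtain ⟨r₀, hr₀, hbound₀⟩ := hW
  set K₁ := Submodule.span ℂ (⇑e '' {i : ℕ | i < N}) with hK₁def
  set K₂ := (Submodule.span ℂ (⇑e '' {i : ℕ | N ≤ i})).topologicalClosure with hK₂def
  have hlampos : (0:ℝ) < ‖lam‖ := norm_pos_iff.mpr hlam
  set r := max r₀ 0 with hrdef
  have hr : r < ‖lam‖ := max_lt hr₀ hlampos
  have hrnn : (0:ℝ) ≤ r := le_max_right _ _
  have hbound : ∀ x ∈ K₂, ‖C x‖ ≤ r * ‖x‖ := fun x hx =>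
    (hbound₀ x hx).trans (mul_le_mul_of_nonneg_right (le_max_left _ _) (norm_nonneg x))
  have horth : ∀ i j : ℕ, ⟪e i, e j⟫ = if i = j then 1 else 0 :=
    orthonormal_iff_ite.mp e.orthonormal
  have hK₂closed : IsClosed (K₂ : Set H) := Submodule.isClosed_topologicalClosure _
  -- inner products of e i (i < N) vanish on K₂
  have hinner : ∀ i, i < N → ∀ z ∈ K₂, ⟪e i, z⟫ = 0 := by
    intro i hi z hz
    have hle : Submodule.span ℂ (⇑e '' {j : ℕ | N ≤ j}) ≤ (innerSL ℂ (e i)).ker := by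
      rw [Submodule.span_le]
      rintro _ ⟨j, hj, rfl⟩
      simp only [SetLike.mem_coe, LinearMap.mem_ker, ContinuousLinearMap.coe_coe, innerSL_apply_apply]
      rw [horth i j, if_neg (hi.trans_le hj).ne]
    have := Submodule.topologicalClosure_minimal _ hle (ContinuousLinearMap.isClosed_ker _) hz
    simpa using this
  have hinnerC : ∀ i, i < N → ∀ z ∈ K₂, ⟪e i, C z⟫ = 0 := by
    intro i hi z hz
    have hle : Submodule.span ℂ (⇑e '' {j : ℕ | N ≤ j}) ≤
        ((innerSL ℂ (e i)).comp C).ker := by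
      rw [Submodule.span_le]
      rintro _ ⟨j, hj, rfl⟩
      simp only [SetLike.mem_coe, LinearMap.mem_ker, ContinuousLinearMap.coe_coe,
        ContinuousLinearMap.comp_apply, innerSL_apply_apply]
      exact inner_eq_zero_symm.mp (htri i j (hi.trans_le hj))
    have := Submodule.topologicalClosure_minimal _ hle (ContinuousLinearMap.isClosed_ker _) hz
    simpa using this
  -- membership criterion for K₂
  have hmemK₂ : ∀ x : H, (∀ i, i < N → ⟪e i, x⟫ = 0) → x ∈ K₂ := by
    intro x hx
    have hs := e.hasSum_repr x
    refine hK₂closed.mem_of_tendsto hs (Filter.Eventually.of_forall fun s => ?_)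
    refine Submodule.sum_mem _ fun j _ => ?_
    by_cases hjN : j < N
    · rw [e.repr_apply_apply, hx j hjN, zero_smul]; exact zero_mem _
    · exact Submodule.smul_mem _ _ (Submodule.le_topologicalClosure _
        (Submodule.subset_span ⟨j, not_lt.mp hjN, rfl⟩))
  have hPx : ∀ x : H, P x = ∑ i ∈ Finset.range N, ⟪e i, x⟫ • e i := by
    intro x
    rw [hP]
    simp [ContinuousLinearMap.sum_apply, ContinuousLinearMap.smulRight_apply]
  have hPmem : ∀ x : H, P x ∈ K₁ := fun x => by
    rw [hPx]
    exact Submodule.sum_mem _ fun i hi =>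
      Submodule.smul_mem _ _ (Submodule.subset_span ⟨i, Finset.mem_range.mp hi, rfl⟩)
  have hPe : ∀ j, j < N → P (e j) = e j := by
    intro j hj
    rw [hPx]
    simp [horth, ite_smul, Finset.sum_ite_eq', hj]
  have hPK₁ : ∀ y ∈ K₁, P y = y := by
    intro y hy
    induction hy using Submodule.span_induction with
    | mem x h => obtain ⟨j, hj, rfl⟩ := h; exact hPe j hj
    | zero => exact map_zero P
    | add a b _ _ ha hb => rw [map_add, ha, hb]
    | smul c a _ ha => rw [map_smul, ha]
  have hPK₂ : ∀ z ∈ K₂, P z = 0 := by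
    intro z hz
    rw [hPx]
    exact Finset.sum_eq_zero fun i hi => by
      rw [hinner i (Finset.mem_range.mp hi) z hz, zero_smul]
  have hsubmem : ∀ x : H, x - P x ∈ K₂ := by
    intro x
    refine hmemK₂ _ fun i hi => ?_
    rw [inner_sub_right, hPx, inner_sum]
    simp only [inner_smul_right, horth, mul_ite, mul_one, mul_zero]
    rw [Finset.sum_ite_eq (Finset.range N) i fun j => ⟪e j, x⟫]
    simp [hi, sub_self]
  have hCmem : ∀ z ∈ K₂, C z ∈ K₂ := fun z hz => hmemK₂ _ fun i hi => hinnerC i hi z hz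
  -- P maps the kernel of C - λ into the kernel of U - λ
  have hmaps : ∀ x : H, C x = lam • x → P (C (P x)) = lam • P x := by
    intro x hx
    have h2 : P (C (x - P x)) = 0 := hPK₂ _ (hCmem _ (hsubmem x))
    have h3 : P x + (x - P x) = x := by abel
    calc P (C (P x)) = P (C (P x)) + P (C (x - P x)) := by rw [h2, add_zero]
      _ = P (C (P x + (x - P x))) := by rw [map_add, map_add]
      _ = P (C x) := by rw [h3]
      _ = lam • P x := by rw [hx, map_smul]
  -- injectivity
  have hinj : ∀ x x' : H, C x = lam • x → C x' = lam • x' → P x = P x' → x = x' := by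
    intro x x' hx hx' hPxx
    by_contra hne
    set d := x - x' with hddef
    have hd : C d = lam • d := by rw [hddef, map_sub, hx, hx', smul_sub]
    have hdP : P d = 0 := by rw [hddef, map_sub, hPxx, sub_self]
    have hdK₂ : d ∈ K₂ := by have := hsubmem d; rwa [hdP, sub_zero] at this
    have hb := hbound d hdK₂
    rw [hd, norm_smul] at hb
    have hdpos : (0:ℝ) < ‖d‖ := norm_pos_iff.mpr (sub_ne_zero_of_ne hne)
    have : ‖lam‖ ≤ r := le_of_mul_le_mul_right hb hdpos
    exact absurd this (not_le.mpr hr)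
  -- existence of completion
  have hexist : ∀ y ∈ K₁, P (C y) = lam • y → ∃ x : H, C x = lam • x ∧ P x = y := by
    intro y hy hUy
    set w := C y - P (C y) with hwdef
    have hw : w ∈ K₂ := hsubmem (C y)
    haveI : CompleteSpace K₂ := hK₂closed.completeSpace_coe
    haveI : Nonempty K₂ := ⟨0⟩
    set T : K₂ → K₂ := fun z => ⟨lam⁻¹ • (C z.1 + w),
      Submodule.smul_mem _ _ (Submodule.add_mem _ (hCmem _ z.2) hw)⟩ with hTdef
    set Kc : NNReal := ⟨r / ‖lam‖, div_nonneg hrnn hlampos.le⟩ with hKcdef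
    have hKc1 : Kc < 1 := by
      rw [← NNReal.coe_lt_coe]
      exact (div_lt_one hlampos).mpr hr
    have hlip : LipschitzWith Kc T := by
      refine LipschitzWith.of_dist_le_mul fun a b => ?_
      have hsub : (a:H) - b ∈ K₂ := Submodule.sub_mem _ a.2 b.2
      have h1 : dist (T a) (T b) = ‖lam‖⁻¹ * ‖C ((a:H) - b)‖ := by
        rw [Subtype.dist_eq, dist_eq_norm]
        show ‖lam⁻¹ • ((C a:H) + w) - lam⁻¹ • ((C b:H) + w)‖ = _
        rw [← smul_sub, add_sub_add_right_eq_sub, ← map_sub, norm_smul, norm_inv]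
      rw [h1, Subtype.dist_eq, dist_eq_norm]
      calc ‖lam‖⁻¹ * ‖C ((a:H) - b)‖ ≤ ‖lam‖⁻¹ * (r * ‖(a:H) - b‖) :=
            mul_le_mul_of_nonneg_left (hbound _ hsub) (inv_nonneg.mpr hlampos.le)
        _ = ↑Kc * ‖(a:H) - b‖ := by rw [hKcdef]; show _ = (r / ‖lam‖) * _; ring
    have hcontr : ContractingWith Kc T := ⟨hKc1, hlip⟩
    set z := ContractingWith.fixedPoint T hcontr with hzdef
    have hz : T z = z := hcontr.fixedPoint_isFixedPt
    have hz1 : lam⁻¹ • (C (z:H) + w) = (z:H) := congrArg Subtype.val hz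
    have hz2 : C (z:H) + w = lam • (z:H) := by
      have := congrArg (fun v => lam • v) hz1
      simpa [smul_smul, mul_inv_cancel₀ hlam] using this
    have hCz : C (z:H) = lam • (z:H) - w := by rw [← hz2]; abel
    refine ⟨y + (z:H), ?_, ?_⟩
    · rw [map_add, hCz, hwdef, hUy, smul_add]
      abel
    · rw [map_add, hPK₁ y hy, hPK₂ (z:H) z.2, add_zero]
  constructor
  · refine ⟨fun x hx => ⟨hPmem x, hmaps x hx⟩, fun x hx x' hx' h => hinj x x' hx hx' h, ?_⟩
    intro y hy
    obtain ⟨x, hx1, hx2⟩ := hexist y hy.1 hy.2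
    exact ⟨x, hx1, hx2⟩
  · intro y hy1 hy2
    obtain ⟨x, hx1, hx2⟩ := hexist y hy1 hy2
    exact ⟨x, ⟨hx1, hx2⟩, fun x' hx' => hinj x' x hx'.1 hx1 (hx'.2.trans hx2.symm)⟩
end

section
/- Let φ : 𝔹ⁿ → 𝔹ⁿ be an analytic map with φ(0) = 0, whose derivative φ'(0) (identified with an n×n complex matrix) is invertible, and which is not unitary on any slice, i.e. ‖φ(z)‖ < ‖z‖ for every z ∈ 𝔹ⁿ with z ≠ 0. Let k ≥ 2 be an integer. Then every analytic map F : 𝔹ⁿ → ℂⁿ satisfying F(φ(z)) = φ'(0)^k F(z) for all z ∈ 𝔹ⁿ has non-invertible derivative at 0, i.e. the matrix F'(0) is singular; in particular no such F can have full rank near 0. -/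
open Metric

private lemma aux_eig_lt_one {n : ℕ}
    (φ : EuclideanSpace ℂ (Fin n) → EuclideanSpace ℂ (Fin n))
    (han : AnalyticOnNhd ℂ φ (ball (0 : EuclideanSpace ℂ (Fin n)) 1))
    (hfix : φ 0 = 0)
    (hslice : ∀ z ∈ ball (0 : EuclideanSpace ℂ (Fin n)) 1, z ≠ 0 → ‖φ z‖ < ‖z‖)
    (u : EuclideanSpace ℂ (Fin n)) (hu : ‖u‖ = 1) (lam : ℂ)
    (hl : fderiv ℂ φ 0 u = lam • u) : ‖lam‖ < 1 := by
  set g : ℂ → ℂ := fun ζ => innerSL ℂ u (φ (ζ • u)) with hgdef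
  have hu0 : u ≠ 0 := by
    intro h; rw [h, norm_zero] at hu; norm_num at hu
  have hmem : Set.MapsTo (fun ζ : ℂ => ζ • u)
      (ball (0:ℂ) (3/4)) (ball (0 : EuclideanSpace ℂ (Fin n)) 1) := by
    intro ζ hζ
    simp only [mem_ball, dist_eq_norm, sub_zero] at hζ ⊢
    rw [norm_smul, hu, mul_one]
    linarith
  have hφs : DifferentiableOn ℂ (fun ζ : ℂ => φ (ζ • u)) (ball (0:ℂ) (3/4)) :=
    han.differentiableOn.comp ((differentiable_id.smul_const u).differentiableOn) hmem
  have hgd : DifferentiableOn ℂ g (ball (0:ℂ) (3/4)) :=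
    (innerSL ℂ u).differentiable.comp_differentiableOn hφs
  have hgc : ContinuousOn g (closedBall (0:ℂ) (1/2)) :=
    hgd.continuousOn.mono (by
      intro x hx
      simp only [mem_closedBall, mem_ball, dist_eq_norm, sub_zero] at hx ⊢
      linarith)
  have hg0 : g 0 = 0 := by simp [hgdef, hfix]
  have hlt : ∀ ζ ∈ closedBall (0:ℂ) (1/2), ‖g ζ‖ < 1/2 := by
    intro ζ hζ
    rcases eq_or_ne ζ 0 with rfl | hζ0
    · rw [hg0]; norm_num
    · have h1 : ‖ζ‖ ≤ 1/2 := by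
        simpa [mem_closedBall, dist_eq_norm] using hζ
      have h2 : (ζ • u) ∈ ball (0 : EuclideanSpace ℂ (Fin n)) 1 := by
        simp only [mem_ball, dist_eq_norm, sub_zero]
        rw [norm_smul, hu, mul_one]; linarith
      have h3 : ‖φ (ζ • u)‖ < ‖ζ • u‖ := hslice _ h2 (smul_ne_zero hζ0 hu0)
      calc ‖g ζ‖ ≤ ‖u‖ * ‖φ (ζ • u)‖ := norm_inner_le_norm u _
        _ < ‖ζ • u‖ := by rw [hu, one_mul]; exact h3
        _ ≤ 1/2 := by rw [norm_smul, hu, mul_one]; exact h1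
  obtain ⟨ζ₀, hζ₀mem, hmax⟩ := (isCompact_closedBall (0:ℂ) (1/2)).exists_isMaxOn
    (nonempty_closedBall.2 (by norm_num)) hgc.norm
  set M := ‖g ζ₀‖ with hM
  have hM2 : M < 1/2 := hlt _ hζ₀mem
  have hmaps : Set.MapsTo g (ball (0:ℂ) (1/2)) (ball (g 0) ((M + 1/2)/2)) := by
    intro ζ hζ
    have h := hmax (ball_subset_closedBall hζ)
    simp only [Set.mem_setOf_eq] at h
    rw [hg0]
    simp only [mem_ball, dist_eq_norm, sub_zero]
    have : ‖g ζ‖ ≤ M := h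
    linarith
  have hschwarz : ‖deriv g 0‖ ≤ ((M + 1/2)/2) / (1/2) :=
    Complex.norm_deriv_le_div_of_mapsTo_ball
      (hgd.mono (ball_subset_ball (by norm_num))) (hmaps.mono_right ball_subset_closedBall) (by norm_num)
  have hder : HasDerivAt g lam 0 := by
    have h1 : HasDerivAt (fun ζ : ℂ => ζ • u) u 0 := by
      simpa using (hasDerivAt_id (0:ℂ)).smul_const u
    have h2 : HasFDerivAt φ (fderiv ℂ φ 0) ((0:ℂ) • u) := by
      rw [zero_smul]
      exact (han 0 (mem_ball_self one_pos)).differentiableAt.hasFDerivAt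
    have h3 : HasDerivAt (fun ζ : ℂ => φ (ζ • u)) (fderiv ℂ φ 0 u) 0 :=
      h2.comp_hasDerivAt 0 h1
    have h4 := (innerSL ℂ u).hasFDerivAt.comp_hasDerivAt 0 h3
    have h5 : innerSL ℂ u (fderiv ℂ φ 0 u) = lam := by
      rw [hl, innerSL_apply_apply, inner_smul_right, inner_self_eq_norm_sq_to_K, hu]
      norm_num
    rw [h5] at h4
    exact h4
  rw [hder.deriv] at hschwarz
  have hM0 : 0 ≤ M := norm_nonneg _
  calc ‖lam‖ ≤ ((M + 1/2)/2)/(1/2) := hschwarz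
    _ < 1 := by linarith

/-- Let `φ` be an analytic self-map of the open unit ball `𝔹ⁿ ⊆ ℂⁿ` with
`φ(0) = 0`, invertible derivative `φ'(0)`, and not unitary on any slice.  If `k ≥ 2`, then
every analytic `F : 𝔹ⁿ → ℂⁿ` with `F ∘ φ = φ'(0)^k F` has singular derivative at `0`; in
particular no such `F` has full rank near `0`. -/
theorem schroeder_power_no_full_rank_solution (n : ℕ) (hn : 1 ≤ n)
    (φ : EuclideanSpace ℂ (Fin n) → EuclideanSpace ℂ (Fin n))
    (hmap : Set.MapsTo φ (ball (0 : EuclideanSpace ℂ (Fin n)) 1)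
      (ball (0 : EuclideanSpace ℂ (Fin n)) 1))
    (han : AnalyticOnNhd ℂ φ (ball (0 : EuclideanSpace ℂ (Fin n)) 1))
    (hfix : φ 0 = 0)
    (hinv : Function.Bijective (fderiv ℂ φ 0))
    (hslice : ∀ z ∈ ball (0 : EuclideanSpace ℂ (Fin n)) 1, z ≠ 0 → ‖φ z‖ < ‖z‖)
    (k : ℕ) (hk : 2 ≤ k)
    (F : EuclideanSpace ℂ (Fin n) → EuclideanSpace ℂ (Fin n))
    (hFan : AnalyticOnNhd ℂ F (ball (0 : EuclideanSpace ℂ (Fin n)) 1))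
    (hFeq : ∀ z ∈ ball (0 : EuclideanSpace ℂ (Fin n)) 1, F (φ z) = ((fderiv ℂ φ 0) ^ k) (F z)) :
    ¬ Function.Bijective (fderiv ℂ F 0) := by
  intro hB
  classical
  haveI : Nonempty (Fin n) := ⟨⟨0, hn⟩⟩
  set A := fderiv ℂ φ 0 with hA
  set B := fderiv ℂ F 0 with hBdef
  have h0 : (0 : EuclideanSpace ℂ (Fin n)) ∈ ball (0 : EuclideanSpace ℂ (Fin n)) 1 :=
    mem_ball_self one_pos
  have hφd : DifferentiableAt ℂ φ 0 := (han 0 h0).differentiableAt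
  have hFd : DifferentiableAt ℂ F 0 := (hFan 0 h0).differentiableAt
  have hFd' : HasFDerivAt F B (φ 0) := by rw [hfix]; exact hFd.hasFDerivAt
  have h1 : HasFDerivAt (fun z => F (φ z)) (B.comp A) 0 := hFd'.comp 0 hφd.hasFDerivAt
  have h2 : HasFDerivAt (fun z => (A ^ k) (F z)) ((A ^ k).comp B) 0 :=
    (A ^ k).hasFDerivAt.comp 0 hFd.hasFDerivAt
  have heq : (fun z => F (φ z)) =ᶠ[nhds 0] (fun z => (A ^ k) (F z)) :=
    Filter.eventuallyEq_of_mem (isOpen_ball.mem_nhds h0) hFeq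
  have hrel : B.comp A = (A ^ k).comp B := h1.unique (h2.congr_of_eventuallyEq heq)
  have hrelv : ∀ v, B (A v) = (A ^ k) (B v) := by
    intro v
    have := congrArg (fun T : EuclideanSpace ℂ (Fin n) →L[ℂ] EuclideanSpace ℂ (Fin n) => T v) hrel
    simpa using this
  set S : Set ℂ := {lam | ∃ v, v ≠ 0 ∧ A v = lam • v} with hS
  have hSlt : ∀ lam ∈ S, ‖lam‖ < 1 := by
    rintro lam ⟨v, hv0, hv⟩
    have hvn : (0:ℝ) < ‖v‖ := norm_pos_iff.2 hv0
    set u := ((‖v‖ : ℂ))⁻¹ • v with hu'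
    have hun : ‖u‖ = 1 := by
      rw [hu', norm_smul, norm_inv, Complex.norm_real, Real.norm_eq_abs,
        abs_of_pos hvn, inv_mul_cancel₀ hvn.ne']
    have hAu : A u = lam • u := by
      rw [hu', map_smul, hv, smul_comm]
    exact aux_eig_lt_one φ han hfix hslice u hun lam hAu
  have hS0 : ∀ lam ∈ S, lam ≠ 0 := by
    rintro lam ⟨v, hv0, hv⟩ rfl
    exact hv0 (hinv.1 (show A v = A 0 by simp [hv]))
  have hSpow : ∀ lam ∈ S, lam ^ k ∈ S := by
    rintro lam ⟨v, hv0, hv⟩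
    have hAk : ∀ i : ℕ, (A ^ i) v = lam ^ i • v := by
      intro i
      induction i with
      | zero => simp
      | succ i ih =>
        rw [pow_succ, ContinuousLinearMap.mul_apply, hv, map_smul, ih, smul_smul,
          pow_succ, mul_comm]
    obtain ⟨w, hw⟩ := hB.2 v
    refine ⟨w, ?_, ?_⟩
    · rintro rfl; rw [map_zero] at hw; exact hv0 hw.symm
    · apply hB.1
      rw [hrelv w, hw, hAk k, map_smul, hw]
  obtain ⟨lam₀, hlam₀⟩ :=
    Module.End.exists_eigenvalue
      ((A : EuclideanSpace ℂ (Fin n) →ₗ[ℂ] EuclideanSpace ℂ (Fin n)))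
  obtain ⟨v₀, hv₀⟩ := hlam₀.exists_hasEigenvector
  have hlam₀S : lam₀ ∈ S := by
    refine ⟨v₀, hv₀.2, ?_⟩
    have := Module.End.mem_eigenspace_iff.1 hv₀.1
    simpa using this
  set lams : ℕ → ℂ := fun m => lam₀ ^ (k ^ m) with hlams'
  have hlams : ∀ m, lams m ∈ S := by
    intro m
    induction m with
    | zero => simpa [hlams'] using hlam₀S
    | succ m ih =>
      have h := hSpow _ ih
      have hexp : lams (m+1) = (lams m) ^ k := by
        simp only [hlams']
        rw [pow_succ, pow_mul]
      rw [hexp]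
      exact h
  have hr0 : 0 < ‖lam₀‖ := norm_pos_iff.2 (hS0 _ hlam₀S)
  have hr1 : ‖lam₀‖ < 1 := hSlt _ hlam₀S
  have hanti : StrictAnti (fun m => ‖lams m‖) := by
    intro a b hab
    simp only [hlams', norm_pow]
    exact pow_lt_pow_right_of_lt_one₀ hr0 hr1
      (Nat.pow_lt_pow_right (lt_of_lt_of_le one_lt_two hk) hab)
  have hinj : Function.Injective lams := by
    intro a b hab
    exact hanti.injective (by rw [hab])
  choose vs hvs0 hvsA using fun m => hlams m
  have hli := Module.End.eigenvectors_linearIndependent'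
    ((A : EuclideanSpace ℂ (Fin n) →ₗ[ℂ] EuclideanSpace ℂ (Fin n))) lams hinj vs
    (fun m => ⟨Module.End.mem_eigenspace_iff.2 (by simpa using hvsA m), hvs0 m⟩)
  haveI := hli.finite
  exact not_finite ℕ
end

section
/- Let φ : 𝔹ⁿ → 𝔹ⁿ be an analytic map, let λ ∈ ℂ with λ ≠ 0, let s ≥ 1, and let f_1, …, f_s : 𝔹ⁿ → ℂ be analytic functions that are linearly independent over ℂ and satisfy f_j ∘ φ = λ f_j + f_{j+1} for 1 ≤ j ≤ s−1 and f_s ∘ φ = λ f_s. For an integer k ≥ 1 define h_j = λ^{−(k−1)(s−j)} · f_j · f_s^{k−1} for j = 1, …, s. Then h_j ∘ φ = λ^k h_j + h_{j+1} for 1 ≤ j ≤ s−1, h_s ∘ φ = λ^k h_s, and h_1, …, h_s are linearly independent over ℂ. -/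
open Metric

/-- Let `φ : 𝔹ⁿ → 𝔹ⁿ` be analytic, `λ ≠ 0`, and let `f 0, …, f (s-1)` be
linearly independent analytic functions on `𝔹ⁿ` forming a `λ`-chain under composition with `φ`:
`f j ∘ φ = λ f j + f (j+1)` for `j < s - 1` and `f (s-1) ∘ φ = λ f (s-1)`.  For `k ≥ 1`, set
`h j = λ^{-(k-1)(s-1-j)} · f j · (f (s-1))^{k-1}`.  Then the `h j` form a `λ^k`-chain under
composition with `φ` and are linearly independent over `ℂ`. -/
theorem chain_power_construction (n : ℕ) (hn : 1 ≤ n)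
    (φ : EuclideanSpace ℂ (Fin n) → EuclideanSpace ℂ (Fin n))
    (hmap : Set.MapsTo φ (ball (0 : EuclideanSpace ℂ (Fin n)) 1)
      (ball (0 : EuclideanSpace ℂ (Fin n)) 1))
    (han : AnalyticOnNhd ℂ φ (ball (0 : EuclideanSpace ℂ (Fin n)) 1))
    (lam : ℂ) (hlam : lam ≠ 0)
    (s : ℕ) (hs : 0 < s)
    (f : Fin s → EuclideanSpace ℂ (Fin n) → ℂ)
    (hfan : ∀ j, AnalyticOnNhd ℂ (f j) (ball (0 : EuclideanSpace ℂ (Fin n)) 1))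
    (hfind : LinearIndependent ℂ
      (fun j : Fin s => fun z : ball (0 : EuclideanSpace ℂ (Fin n)) 1 => f j z))
    (hchain : ∀ (j : Fin s), ∀ z ∈ ball (0 : EuclideanSpace ℂ (Fin n)) 1,
      f j (φ z) = if h : (j : ℕ) + 1 < s then lam * f j z + f ⟨(j : ℕ) + 1, h⟩ z
        else lam * f j z)
    (k : ℕ) (hk : 1 ≤ k)
    (h : Fin s → EuclideanSpace ℂ (Fin n) → ℂ)
    (hdef : ∀ (j : Fin s) (z : EuclideanSpace ℂ (Fin n)),
      h j z = f j z * (f ⟨s - 1, Nat.sub_lt hs one_pos⟩ z) ^ (k - 1) /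
        lam ^ ((k - 1) * (s - 1 - (j : ℕ)))) :
    (∀ (j : Fin s), ∀ z ∈ ball (0 : EuclideanSpace ℂ (Fin n)) 1,
      h j (φ z) = if hj : (j : ℕ) + 1 < s then lam ^ k * h j z + h ⟨(j : ℕ) + 1, hj⟩ z
        else lam ^ k * h j z) ∧
    LinearIndependent ℂ
      (fun j : Fin s => fun z : ball (0 : EuclideanSpace ℂ (Fin n)) 1 => h j z) := by
  set S : Fin s := ⟨s - 1, Nat.sub_lt hs one_pos⟩ with hS
  obtain ⟨m, rfl⟩ : ∃ m, k = m + 1 := ⟨k - 1, by omega⟩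
  simp only [Nat.add_sub_cancel] at hdef
  have hSchain : ∀ z ∈ ball (0 : EuclideanSpace ℂ (Fin n)) 1,
      f S (φ z) = lam * f S z := by
    intro z hz
    have := hchain S z hz
    rw [dif_neg (by simp [hS]; omega)] at this
    exact this
  constructor
  · intro j z hz
    have hFphi := hSchain z hz
    by_cases hj : (j : ℕ) + 1 < s
    · rw [dif_pos hj]
      have hfj := hchain j z hz
      rw [dif_pos hj] at hfj
      rw [hdef, hdef, hdef, hfj, hFphi]
      have he : m * (s - 1 - (j : ℕ)) = m + m * (s - 1 - ((j : ℕ) + 1)) := by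
        have : s - 1 - (j : ℕ) = (s - 1 - ((j : ℕ) + 1)) + 1 := by omega
        rw [this]; ring
      rw [he, pow_add, mul_pow, pow_succ]
      field_simp
    · rw [dif_neg hj]
      have hjS : j = S := by
        apply Fin.ext
        simp only [hS]
        omega
      subst hjS
      rw [hdef, hdef, hFphi]
      have he : m * (s - 1 - (S : ℕ)) = 0 := by simp [hS]
      rw [he, pow_zero, div_one, div_one, mul_pow, pow_succ]
      ring
  · rw [Fintype.linearIndependent_iff] at hfind ⊢
    intro c hc
    set G : EuclideanSpace ℂ (Fin n) → ℂ :=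
      fun z => ∑ j : Fin s, (c j / lam ^ (m * (s - 1 - (j : ℕ)))) * f j z with hG
    have hprod : ∀ z ∈ ball (0 : EuclideanSpace ℂ (Fin n)) 1,
        G z * (f S z) ^ m = 0 := by
      intro z hz
      have := congrFun hc ⟨z, hz⟩
      simp only [Finset.sum_apply, Pi.smul_apply, smul_eq_mul, Pi.zero_apply] at this
      rw [hG]
      calc (∑ j : Fin s, (c j / lam ^ (m * (s - 1 - (j : ℕ)))) * f j z) * (f S z) ^ m
          = ∑ j : Fin s, c j * h j z := by
            rw [Finset.sum_mul]
            refine Finset.sum_congr rfl fun j _ => ?_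
            rw [hdef]
            ring
        _ = 0 := this
    have hGan : AnalyticOnNhd ℂ G (ball (0 : EuclideanSpace ℂ (Fin n)) 1) := by
      apply Finset.analyticOnNhd_fun_sum
      intro j _
      exact analyticOnNhd_const.mul (hfan j)
    have hfS : ∃ z₀ : ball (0 : EuclideanSpace ℂ (Fin n)) 1, f S z₀ ≠ 0 := by
      by_contra hcon
      push_neg at hcon
      have h0 : ∑ i : Fin s, (if i = S then (1 : ℂ) else 0) •
          (fun z : ball (0 : EuclideanSpace ℂ (Fin n)) 1 => f i z) = 0 := by
        simp only [ite_smul, zero_smul, Finset.sum_ite_eq', Finset.mem_univ, if_true,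
          one_smul]
        funext z
        exact hcon z
      have := hfind _ h0 S
      simp at this
    obtain ⟨⟨z₀, hz₀⟩, hz₀ne⟩ := hfS
    have hev : G =ᶠ[nhds z₀] 0 := by
      have h1 : ∀ᶠ z in nhds z₀, f S z ≠ 0 :=
        ((hfan S z₀ hz₀).continuousAt).eventually_ne hz₀ne
      have h2 : ∀ᶠ z in nhds z₀, z ∈ ball (0 : EuclideanSpace ℂ (Fin n)) 1 :=
        isOpen_ball.eventually_mem hz₀
      filter_upwards [h1, h2] with z hz1 hz2
      have := hprod z hz2
      have hpow : (f S z) ^ m ≠ 0 := pow_ne_zero _ hz1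
      exact (mul_eq_zero.mp this).resolve_right hpow
    have hEq : Set.EqOn G 0 (ball (0 : EuclideanSpace ℂ (Fin n)) 1) :=
      hGan.eqOn_zero_of_preconnected_of_eventuallyEq_zero
        (convex_ball (0 : EuclideanSpace ℂ (Fin n)) 1).isPreconnected hz₀ hev
    have hsum0 : ∑ j : Fin s, (c j / lam ^ (m * (s - 1 - (j : ℕ)))) •
        (fun z : ball (0 : EuclideanSpace ℂ (Fin n)) 1 => f j z) = 0 := by
      funext z
      have := hEq z.2
      simp only [hG, Pi.zero_apply] at this
      simpa using this
    intro j
    have := hfind _ hsum0 j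
    rcases div_eq_zero_iff.mp this with hc0 | hp0
    · exact hc0
    · exact absurd hp0 (pow_ne_zero _ hlam)
end
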